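/- For i = 1, 2, 3, 4 let S_i(x) = (1/3)x + (2/3)(i − 1), and let μ be a Borel probability measure on ℝ with support contained in [0,3] satisfying μ(A) = (1/8) μ(S_1^{-1}(A)) + (3/8) μ(S_2^{-1}(A)) + (3/8) μ(S_3^{-1}(A)) + (1/8) μ(S_4^{-1}(A)) for every Borel set A ⊆ ℝ. Then ∫_{[0,1]} x dμ(x) = 9/70, ∫_{[1,2]} x dμ(x) = 9/10, and ∫_{[2,3]} x dμ(x) = 33/70. -/

import Mathlib

open MeasureTheory Set
open scoped ENNReal

namespace CantorThreefoldAux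

lemma ne_top18 : ((1:ℝ≥0∞)/8) ≠ ⊤ := (ENNReal.div_lt_top (by norm_num) (by norm_num)).ne

lemma ne_top38 : ((3:ℝ≥0∞)/8) ≠ ⊤ := (ENNReal.div_lt_top (by norm_num) (by norm_num)).ne

lemma toReal18 : ((1:ℝ≥0∞)/8).toReal = 1/8 := by simp [ENNReal.toReal_div]

lemma toReal38 : ((3:ℝ≥0∞)/8).toReal = 3/8 := by simp [ENNReal.toReal_div]

lemma hbound (a b x : ℝ) : ‖(Icc a b).indicator (id : ℝ → ℝ) x‖ ≤ |a| + |b| := by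
  rw [Set.indicator]
  split_ifs with h
  · obtain ⟨h1, h2⟩ := h
    rw [id_eq, Real.norm_eq_abs]
    exact abs_le.mpr ⟨by linarith [neg_abs_le a, abs_nonneg b],
      by linarith [le_abs_self b, abs_nonneg a]⟩
  · simp [abs_nonneg, add_nonneg (abs_nonneg a) (abs_nonneg b)]

lemma preI (k a b p q : ℝ) (ha : a = (1/3)*p + k) (hb : b = (1/3)*q + k) :
    (fun x : ℝ => (1/3) * x + k) ⁻¹' Icc a b = Icc p q := by
  ext x
  simp only [mem_preimage, mem_Icc]
  constructor <;> rintro ⟨h1, h2⟩ <;> constructor <;> linarith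

lemma preI' (a b p q : ℝ) (ha : a = (1/3)*p) (hb : b = (1/3)*q) :
    (fun x : ℝ => (1/3) * x) ⁻¹' Icc a b = Icc p q := by
  ext x
  simp only [mem_preimage, mem_Icc]
  constructor <;> rintro ⟨h1, h2⟩ <;> constructor <;> linarith

lemma preS (k c r : ℝ) (h : c = (1/3)*r + k) :
    (fun x : ℝ => (1/3) * x + k) ⁻¹' {c} = {r} := by
  ext x
  simp only [mem_preimage, mem_singleton_iff]
  constructor <;> intro hx <;> linarith

lemma preS' (c r : ℝ) (h : c = (1/3)*r) :
    (fun x : ℝ => (1/3) * x) ⁻¹' {c} = {r} := by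
  ext x
  simp only [mem_preimage, mem_singleton_iff]
  constructor <;> intro hx <;> linarith

lemma hsolve (X : ℝ≥0∞) (hX : X ≠ ⊤) (c : ℝ≥0∞) (hc : c.toReal < 1) (h : X = c * X) :
    X = 0 := by
  have ht : X.toReal = c.toReal * X.toReal := by
    conv_lhs => rw [h]
    exact ENNReal.toReal_mul
  have h0 : X.toReal = 0 := by nlinarith [ENNReal.toReal_nonneg (a := X)]
  rcases (ENNReal.toReal_eq_zero_iff X).mp h0 with h | h
  · exact h
  · exact absurd h hX

/-- The key self-similarity identity for integrals. -/
lemma key (μ : Measure ℝ) [IsProbabilityMeasure μ]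
    (hself : ∀ A : Set ℝ, MeasurableSet A →
      μ A = (1 / 8) * μ ((fun x => (1 / 3) * x) ⁻¹' A) +
            (3 / 8) * μ ((fun x => (1 / 3) * x + 2 / 3) ⁻¹' A) +
            (3 / 8) * μ ((fun x => (1 / 3) * x + 4 / 3) ⁻¹' A) +
            (1 / 8) * μ ((fun x => (1 / 3) * x + 2) ⁻¹' A))
    (f : ℝ → ℝ) (hm : Measurable f) (C : ℝ) (hb : ∀ x, ‖f x‖ ≤ C) :
    ∫ x, f x ∂μ = (1/8) * ∫ x, f ((1/3) * x + 0) ∂μ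
      + (3/8) * ∫ x, f ((1/3) * x + 2/3) ∂μ
      + (3/8) * ∫ x, f ((1/3) * x + 4/3) ∂μ
      + (1/8) * ∫ x, f ((1/3) * x + 2) ∂μ := by
  have hS1 : Measurable fun x : ℝ => (1/3) * x := by fun_prop
  have hS2 : Measurable fun x : ℝ => (1/3) * x + 2/3 := by fun_prop
  have hS3 : Measurable fun x : ℝ => (1/3) * x + 4/3 := by fun_prop
  have hS4 : Measurable fun x : ℝ => (1/3) * x + 2 := by fun_prop
  have hfi : ∀ g : ℝ → ℝ, Measurable g → Integrable f (μ.map g) := by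
    intro g hg
    haveI := Measure.isProbabilityMeasure_map (μ := μ) hg.aemeasurable
    exact Integrable.mono' (integrable_const C) hm.aestronglyMeasurable (ae_of_all _ hb)
  have I1 : Integrable f ((1/8 : ℝ≥0∞) • μ.map (fun x : ℝ => (1/3) * x)) :=
    (hfi _ hS1).smul_measure ne_top18
  have I2 : Integrable f ((3/8 : ℝ≥0∞) • μ.map (fun x : ℝ => (1/3) * x + 2/3)) :=
    (hfi _ hS2).smul_measure ne_top38
  have I3 : Integrable f ((3/8 : ℝ≥0∞) • μ.map (fun x : ℝ => (1/3) * x + 4/3)) :=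
    (hfi _ hS3).smul_measure ne_top38
  have I4 : Integrable f ((1/8 : ℝ≥0∞) • μ.map (fun x : ℝ => (1/3) * x + 2)) :=
    (hfi _ hS4).smul_measure ne_top18
  have hμν : μ = (1/8 : ℝ≥0∞) • μ.map (fun x : ℝ => (1/3) * x)
      + (3/8 : ℝ≥0∞) • μ.map (fun x : ℝ => (1/3) * x + 2/3)
      + (3/8 : ℝ≥0∞) • μ.map (fun x : ℝ => (1/3) * x + 4/3)
      + (1/8 : ℝ≥0∞) • μ.map (fun x : ℝ => (1/3) * x + 2) := by
    ext A hA
    rw [hself A hA]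
    simp only [Measure.coe_add, Pi.add_apply, Measure.coe_smul, Pi.smul_apply, smul_eq_mul,
      Measure.map_apply hS1 hA, Measure.map_apply hS2 hA, Measure.map_apply hS3 hA,
      Measure.map_apply hS4 hA]
  conv_lhs => rw [hμν]
  rw [integral_add_measure ((I1.add_measure I2).add_measure I3) I4,
      integral_add_measure (I1.add_measure I2) I3,
      integral_add_measure I1 I2,
      integral_smul_measure, integral_smul_measure, integral_smul_measure, integral_smul_measure,
      integral_map hS1.aemeasurable hm.aestronglyMeasurable,
      integral_map hS2.aemeasurable hm.aestronglyMeasurable,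
      integral_map hS3.aemeasurable hm.aestronglyMeasurable,
      integral_map hS4.aemeasurable hm.aestronglyMeasurable]
  simp only [toReal18, toReal38, smul_eq_mul, add_zero]

end CantorThreefoldAux

open CantorThreefoldAux

set_option maxHeartbeats 2000000 in
/-- For the 3-fold convolution of the Cantor measure `μ`, one has
`∫_{[0,1]} x dμ = 9/70`, `∫_{[1,2]} x dμ = 9/10`, `∫_{[2,3]} x dμ = 33/70`. -/
theorem cantor_threefold_first_moments
    (μ : Measure ℝ) [IsProbabilityMeasure μ]
    (hsupp : μ (Set.Icc (0 : ℝ) 3)ᶜ = 0)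
    (hself : ∀ A : Set ℝ, MeasurableSet A →
      μ A = (1 / 8) * μ ((fun x => (1 / 3) * x) ⁻¹' A) +
            (3 / 8) * μ ((fun x => (1 / 3) * x + 2 / 3) ⁻¹' A) +
            (3 / 8) * μ ((fun x => (1 / 3) * x + 4 / 3) ⁻¹' A) +
            (1 / 8) * μ ((fun x => (1 / 3) * x + 2) ⁻¹' A)) :
    (∫ x in Set.Icc (0 : ℝ) 1, x ∂μ) = 9 / 70 ∧
    (∫ x in Set.Icc (1 : ℝ) 2, x ∂μ) = 9 / 10 ∧
    (∫ x in Set.Icc (2 : ℝ) 3, x ∂μ) = 33 / 70 := by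
  have hnull : ∀ s : Set ℝ, s ⊆ (Icc (0:ℝ) 3)ᶜ → μ s = 0 :=
    fun s hs => measure_mono_null hs hsupp
  have hfull : μ (Icc (0:ℝ) 3) = 1 := by
    have h := measure_compl (measurableSet_Icc : MeasurableSet (Icc (0:ℝ) 3)) (measure_ne_top μ _)
    rw [hsupp, measure_univ] at h
    exact le_antisymm prob_le_one (tsub_eq_zero_iff_le.mp h.symm)
  -- null intervals outside the support
  have hnullI : ∀ p q : ℝ, q < 0 ∨ 3 < p → μ (Icc p q) = 0 := by
    intro p q h
    apply hnull
    rintro x ⟨a1, a2⟩ hx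
    obtain ⟨b1, b2⟩ := hx
    rcases h with h | h <;> linarith
  have hz : ∀ p q : ℝ, q < 0 ∨ 3 < p →
      (∫ x in Icc p q, x ∂μ) = 0 ∧ (μ (Icc p q)).toReal = 0 := by
    intro p q h
    constructor
    · rw [Measure.restrict_eq_zero.mpr (hnullI p q h)]
      exact integral_zero_measure _
    · rw [hnullI p q h, ENNReal.toReal_zero]
  -- ae-equality of intervals modulo the support
  have hae : ∀ p q p' q' : ℝ, p ≤ p' → q' ≤ q →
      (∀ x : ℝ, p ≤ x → x ≤ q → 0 ≤ x → x ≤ 3 → p' ≤ x ∧ x ≤ q') →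
      Icc p q =ᵐ[μ] Icc p' q' := by
    intro p q p' q' h1 h2 h5
    refine (ae_eq_set).mpr ⟨hnull _ ?_, hnull _ ?_⟩
    · rintro x ⟨⟨a1, a2⟩, a3⟩ hx
      obtain ⟨b1, b2⟩ := hx
      exact a3 ⟨(h5 x a1 a2 b1 b2).1, (h5 x a1 a2 b1 b2).2⟩
    · rintro x ⟨⟨a1, a2⟩, a3⟩
      exact absurd ⟨h1.trans a1, a2.trans h2⟩ a3
  -- singleton masses outside the support
  have hptn : ∀ r : ℝ, r < 0 ∨ 3 < r → μ {r} = 0 := by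
    intro r h
    apply hnull
    intro x hx
    rw [mem_singleton_iff] at hx
    subst hx
    rintro ⟨b1, b2⟩
    rcases h with h | h <;> linarith
  -- singleton masses at the break points are zero
  have hpt0 : μ {(0:ℝ)} = 0 := by
    have h := hself {0} (measurableSet_singleton 0)
    rw [preS' 0 0 (by norm_num), preS (2/3) 0 (-2) (by norm_num),
        preS (4/3) 0 (-4) (by norm_num), preS 2 0 (-6) (by norm_num),
        hptn (-2) (Or.inl (by norm_num)), hptn (-4) (Or.inl (by norm_num)),
        hptn (-6) (Or.inl (by norm_num))] at h
    simp only [mul_zero, add_zero, zero_add] at h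
    exact hsolve _ (measure_ne_top μ _) _ (by rw [toReal18]; norm_num) h
  have hpt3 : μ {(3:ℝ)} = 0 := by
    have h := hself {3} (measurableSet_singleton 3)
    rw [preS' 3 9 (by norm_num), preS (2/3) 3 7 (by norm_num),
        preS (4/3) 3 5 (by norm_num), preS 2 3 3 (by norm_num),
        hptn 9 (Or.inr (by norm_num)), hptn 7 (Or.inr (by norm_num)),
        hptn 5 (Or.inr (by norm_num))] at h
    simp only [mul_zero, add_zero, zero_add] at h
    exact hsolve _ (measure_ne_top μ _) _ (by rw [toReal18]; norm_num) h
  have hpt1 : μ {(1:ℝ)} = 0 := by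
    have h := hself {1} (measurableSet_singleton 1)
    rw [preS' 1 3 (by norm_num), preS (2/3) 1 1 (by norm_num),
        preS (4/3) 1 (-1) (by norm_num), preS 2 1 (-3) (by norm_num),
        hpt3, hptn (-1) (Or.inl (by norm_num)), hptn (-3) (Or.inl (by norm_num))] at h
    simp only [mul_zero, add_zero, zero_add] at h
    exact hsolve _ (measure_ne_top μ _) _ (by rw [toReal38]; norm_num) h
  have hpt2 : μ {(2:ℝ)} = 0 := by
    have h := hself {2} (measurableSet_singleton 2)
    rw [preS' 2 6 (by norm_num), preS (2/3) 2 4 (by norm_num),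
        preS (4/3) 2 2 (by norm_num), preS 2 2 0 (by norm_num),
        hpt0, hptn 6 (Or.inr (by norm_num)), hptn 4 (Or.inr (by norm_num))] at h
    simp only [mul_zero, add_zero, zero_add] at h
    exact hsolve _ (measure_ne_top μ _) _ (by rw [toReal38]; norm_num) h
  -- measures of the three subintervals
  have hJ3 : (μ (Icc (0:ℝ) 3)).toReal = 1 := by rw [hfull, ENNReal.toReal_one]
  have hsolveJ : ∀ X : ℝ≥0∞, X ≠ ⊤ → X = 1/8 + 3/8 * X → X.toReal = 1/5 := by
    intro X hX h
    have ht : X.toReal = ((1:ℝ≥0∞)/8).toReal + ((3/8 : ℝ≥0∞) * X).toReal := by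
      rw [← ENNReal.toReal_add ne_top18 (ENNReal.mul_ne_top ne_top38 hX)]
      exact congrArg ENNReal.toReal h
    rw [ENNReal.toReal_mul, toReal18, toReal38] at ht
    linarith
  have hJ1 : (μ (Icc (0:ℝ) 1)).toReal = 1/5 := by
    have h := hself (Icc 0 1) measurableSet_Icc
    rw [preI' 0 1 0 3 (by norm_num) (by norm_num),
        preI (2/3) 0 1 (-2) 1 (by norm_num) (by norm_num),
        preI (4/3) 0 1 (-4) (-1) (by norm_num) (by norm_num),
        preI 2 0 1 (-6) (-3) (by norm_num) (by norm_num),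
        hfull, hnullI (-4) (-1) (Or.inl (by norm_num)),
        hnullI (-6) (-3) (Or.inl (by norm_num)),
        measure_congr (hae (-2) 1 0 1 (by norm_num) (by norm_num)
          (fun x h1 h2 h3 h4 => ⟨by linarith, by linarith⟩))] at h
    simp only [mul_zero, add_zero, zero_add, mul_one] at h
    exact hsolveJ _ (measure_ne_top μ _) h
  have hJ23 : (μ (Icc (2:ℝ) 3)).toReal = 1/5 := by
    have h := hself (Icc 2 3) measurableSet_Icc
    rw [preI' 2 3 6 9 (by norm_num) (by norm_num),
        preI (2/3) 2 3 4 7 (by norm_num) (by norm_num),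
        preI (4/3) 2 3 2 5 (by norm_num) (by norm_num),
        preI 2 2 3 0 3 (by norm_num) (by norm_num),
        hfull, hnullI 6 9 (Or.inr (by norm_num)),
        hnullI 4 7 (Or.inr (by norm_num)),
        measure_congr (hae 2 5 2 3 (by norm_num) (by norm_num)
          (fun x h1 h2 h3 h4 => ⟨by linarith, by linarith⟩))] at h
    simp only [mul_zero, add_zero, zero_add, mul_one] at h
    rw [add_comm] at h
    exact hsolveJ _ (measure_ne_top μ _) h
  -- integrability
  have hIOn : ∀ p q : ℝ, IntegrableOn (fun x : ℝ => x) (Icc p q) μ :=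
    fun p q => (continuous_id.continuousOn).integrableOn_compact isCompact_Icc
  -- evaluation of each composed term
  have hterm : ∀ a b k p q : ℝ, a = (1/3)*p + k → b = (1/3)*q + k →
      ∫ x, (Icc a b).indicator id ((1/3) * x + k) ∂μ
        = (1/3) * (∫ x in Icc p q, x ∂μ) + k * (μ (Icc p q)).toReal := by
    intro a b k p q ha hb
    have hpt : ∀ x : ℝ, (Icc a b).indicator id ((1/3) * x + k)
        = (Icc p q).indicator (fun x => (1/3) * x + k) x := by
      intro x
      by_cases h : x ∈ Icc p q
      · rw [indicator_of_mem h]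
        refine indicator_of_mem ?_ id
        obtain ⟨h1, h2⟩ := h
        exact ⟨by rw [ha]; linarith, by rw [hb]; linarith⟩
      · rw [indicator_of_notMem h]
        refine indicator_of_notMem ?_ id
        rintro ⟨h1, h2⟩
        rw [ha] at h1
        rw [hb] at h2
        exact h ⟨by linarith, by linarith⟩
    simp only [hpt]
    rw [integral_indicator measurableSet_Icc,
        integral_add ((hIOn p q).const_mul (1/3)) (integrable_const k).integrableOn,
        MeasureTheory.integral_const_mul, setIntegral_const, smul_eq_mul, measureReal_def]
    ring
  -- the three key identities
  set m := ∫ x in Icc (0:ℝ) 3, x ∂μ with hm_def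
  set a := ∫ x in Icc (0:ℝ) 1, x ∂μ with ha_def
  set b := ∫ x in Icc (1:ℝ) 2, x ∂μ with hb_def
  set c := ∫ x in Icc (2:ℝ) 3, x ∂μ with hc_def
  have H03 := key μ hself ((Icc (0:ℝ) 3).indicator id)
    (measurable_id.indicator measurableSet_Icc) _ (hbound 0 3)
  rw [integral_indicator measurableSet_Icc,
      hterm 0 3 0 0 9 (by norm_num) (by norm_num),
      hterm 0 3 (2/3) (-2) 7 (by norm_num) (by norm_num),
      hterm 0 3 (4/3) (-4) 5 (by norm_num) (by norm_num),
      hterm 0 3 2 (-6) 3 (by norm_num) (by norm_num),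
      setIntegral_congr_set (hae 0 9 0 3 (by norm_num) (by norm_num)
        (fun x h1 h2 h3 h4 => ⟨by linarith, by linarith⟩)),
      setIntegral_congr_set (hae (-2) 7 0 3 (by norm_num) (by norm_num)
        (fun x h1 h2 h3 h4 => ⟨by linarith, by linarith⟩)),
      setIntegral_congr_set (hae (-4) 5 0 3 (by norm_num) (by norm_num)
        (fun x h1 h2 h3 h4 => ⟨by linarith, by linarith⟩)),
      setIntegral_congr_set (hae (-6) 3 0 3 (by norm_num) (by norm_num)
        (fun x h1 h2 h3 h4 => ⟨by linarith, by linarith⟩)),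
      measure_congr (hae (-2) 7 0 3 (by norm_num) (by norm_num)
        (fun x h1 h2 h3 h4 => ⟨by linarith, by linarith⟩)),
      measure_congr (hae (-4) 5 0 3 (by norm_num) (by norm_num)
        (fun x h1 h2 h3 h4 => ⟨by linarith, by linarith⟩)),
      measure_congr (hae (-6) 3 0 3 (by norm_num) (by norm_num)
        (fun x h1 h2 h3 h4 => ⟨by linarith, by linarith⟩)),
      hJ3] at H03
  simp only [id_eq, ← hm_def] at H03
  have hm : m = 3/2 := by linarith
  have H01 := key μ hself ((Icc (0:ℝ) 1).indicator id)
    (measurable_id.indicator measurableSet_Icc) _ (hbound 0 1)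
  rw [integral_indicator measurableSet_Icc,
      hterm 0 1 0 0 3 (by norm_num) (by norm_num),
      hterm 0 1 (2/3) (-2) 1 (by norm_num) (by norm_num),
      hterm 0 1 (4/3) (-4) (-1) (by norm_num) (by norm_num),
      hterm 0 1 2 (-6) (-3) (by norm_num) (by norm_num),
      setIntegral_congr_set (hae (-2) 1 0 1 (by norm_num) (by norm_num)
        (fun x h1 h2 h3 h4 => ⟨by linarith, by linarith⟩)),
      measure_congr (hae (-2) 1 0 1 (by norm_num) (by norm_num)
        (fun x h1 h2 h3 h4 => ⟨by linarith, by linarith⟩)),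
      (hz (-4) (-1) (Or.inl (by norm_num))).1, (hz (-4) (-1) (Or.inl (by norm_num))).2,
      (hz (-6) (-3) (Or.inl (by norm_num))).1, (hz (-6) (-3) (Or.inl (by norm_num))).2,
      hJ1] at H01
  simp only [id_eq, ← hm_def, ← ha_def] at H01
  have haval : a = 9/70 := by linarith
  have H23 := key μ hself ((Icc (2:ℝ) 3).indicator id)
    (measurable_id.indicator measurableSet_Icc) _ (hbound 2 3)
  rw [integral_indicator measurableSet_Icc,
      hterm 2 3 0 6 9 (by norm_num) (by norm_num),
      hterm 2 3 (2/3) 4 7 (by norm_num) (by norm_num),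
      hterm 2 3 (4/3) 2 5 (by norm_num) (by norm_num),
      hterm 2 3 2 0 3 (by norm_num) (by norm_num),
      setIntegral_congr_set (hae 2 5 2 3 (by norm_num) (by norm_num)
        (fun x h1 h2 h3 h4 => ⟨by linarith, by linarith⟩)),
      measure_congr (hae 2 5 2 3 (by norm_num) (by norm_num)
        (fun x h1 h2 h3 h4 => ⟨by linarith, by linarith⟩)),
      (hz 6 9 (Or.inr (by norm_num))).1, (hz 6 9 (Or.inr (by norm_num))).2,
      (hz 4 7 (Or.inr (by norm_num))).1, (hz 4 7 (Or.inr (by norm_num))).2,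
      hJ23, hJ3] at H23
  simp only [id_eq, ← hm_def, ← hc_def] at H23
  have hcval : c = 33/70 := by linarith
  -- splitting [0,3] into the three pieces
  have haeIoc : ∀ p q : ℝ, μ {p} = 0 → Icc p q =ᵐ[μ] Ioc p q := by
    intro p q hp
    refine (ae_eq_set).mpr ⟨measure_mono_null ?_ hp, ?_⟩
    · rintro x ⟨⟨h1, h2⟩, h3⟩
      have hnl : ¬ p < x := fun hlt => h3 ⟨hlt, h2⟩
      exact le_antisymm (not_lt.mp hnl) h1
    · rw [diff_eq_empty.mpr Ioc_subset_Icc_self, measure_empty]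
  have hsplit : m = a + b + c := by
    have e1 : Icc (0:ℝ) 3 = Icc 0 1 ∪ Ioc 1 3 :=
      (Icc_union_Ioc_eq_Icc (by norm_num) (by norm_num)).symm
    have e2 : Ioc (1:ℝ) 3 = Ioc 1 2 ∪ Ioc 2 3 :=
      (Ioc_union_Ioc_eq_Ioc (by norm_num) (by norm_num)).symm
    have d1 : Disjoint (Icc (0:ℝ) 1) (Ioc 1 3) :=
      Set.disjoint_left.mpr fun x hx hx' => absurd hx'.1 (not_lt.mpr hx.2)
    have d2 : Disjoint (Ioc (1:ℝ) 2) (Ioc 2 3) :=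
      Set.disjoint_left.mpr fun x hx hx' => absurd hx'.1 (not_lt.mpr hx.2)
    rw [hm_def, e1,
        setIntegral_union d1 measurableSet_Ioc (hIOn 0 1)
          ((hIOn 1 3).mono_set Ioc_subset_Icc_self),
        e2,
        setIntegral_union d2 measurableSet_Ioc ((hIOn 1 2).mono_set Ioc_subset_Icc_self)
          ((hIOn 2 3).mono_set Ioc_subset_Icc_self),
        ← setIntegral_congr_set (haeIoc 1 2 hpt1),
        ← setIntegral_congr_set (haeIoc 2 3 hpt2)]
    ring
  have hbval : b = 9/10 := by linarith
  exact ⟨haval, hbval, hcval⟩
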